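/- Let L ⊆ E be a linear subspace and let 𝒞 = {(y, w) ∈ K* × C* : A* y − w ∈ L}. Suppose there exist ŷ ∈ relint K* and ŵ ∈ relint C* with A* ŷ − ŵ ∈ L. Then the orthogonal projection of X(b) onto L satisfies proj_L X(b) := {x ∈ L : there exists u ∈ L⊥ with x + u ∈ X(b)} = {x ∈ L : ⟨A* y − w, x⟩ ≤ ⟨b, y⟩ for all (y, w) ∈ 𝒞}. -/

import Mathlib

open RealInnerProductSpace Set Pointwise

variable {E E' : Type*}
  [NormedAddCommGroup E] [InnerProductSpace ℝ E] [FiniteDimensional ℝ E]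
  [NormedAddCommGroup E'] [InnerProductSpace ℝ E'] [FiniteDimensional ℝ E']

/-- A nonempty closed convex cone containing `0`. -/
structure IsClosedConvexCone {F : Type*} [NormedAddCommGroup F] [InnerProductSpace ℝ F]
    (K : Set F) : Prop where
  closed : IsClosed K
  convex : Convex ℝ K
  smul_mem : ∀ ⦃x⦄, x ∈ K → ∀ ⦃t : ℝ⦄, 0 ≤ t → t • x ∈ K
  zero_mem : (0 : F) ∈ K

/-- The dual cone `S* = {y : ⟨x,y⟩ ≥ 0 ∀ x ∈ S}`. -/
def dualCone {F : Type*} [NormedAddCommGroup F] [InnerProductSpace ℝ F] (S : Set F) : Set F :=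
  {y | ∀ x ∈ S, 0 ≤ ⟪x, y⟫}

/-- The polar cone `S° = {y : ⟨x,y⟩ ≤ 0 ∀ x ∈ S}`. -/
def polarCone {F : Type*} [NormedAddCommGroup F] [InnerProductSpace ℝ F] (S : Set F) : Set F :=
  {y | ∀ x ∈ S, ⟪x, y⟫ ≤ 0}

/-- Primal feasible set `X(b) = {x ∈ C : b - A x ∈ K}`. -/
def Xfeas (A : E →ₗ[ℝ] E') (K : Set E') (C : Set E) (b : E') : Set E :=
  {x | x ∈ C ∧ b - A x ∈ K}

/-- Dual feasible set `Y(c) = {y ∈ K* : A* y - c ∈ C*}`. -/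
def Yfeas (A : E →ₗ[ℝ] E') (K : Set E') (C : Set E) (c : E) : Set E' :=
  {y | y ∈ dualCone K ∧ LinearMap.adjoint A y - c ∈ dualCone C}

/-- Primal optimal value `P* = sup {⟨c,x⟩ : x ∈ X(b)}`. -/
noncomputable def Pval (A : E →ₗ[ℝ] E') (K : Set E') (C : Set E) (b : E') (c : E) : ℝ :=
  sSup ((fun x => ⟪c, x⟫) '' Xfeas A K C b)

/-- Dual optimal value `D* = inf {⟨b,y⟩ : y ∈ Y(c)}`. -/
noncomputable def Dval (A : E →ₗ[ℝ] E') (K : Set E') (C : Set E) (b : E') (c : E) : ℝ :=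
  sInf ((fun y => ⟪b, y⟫) '' Yfeas A K C c)

/-- Recession cone of the primal feasible region: `{x ∈ C : A x ∈ -K}`. -/
def recXSet (A : E →ₗ[ℝ] E') (K : Set E') (C : Set E) : Set E :=
  {x | x ∈ C ∧ A x ∈ -K}

/-- Recession cone of the dual feasible region: `{y ∈ K* : A* y ∈ C*}`. -/
def recYSet (A : E →ₗ[ℝ] E') (K : Set E') (C : Set E) : Set E' :=
  {y | y ∈ dualCone K ∧ LinearMap.adjoint A y ∈ dualCone C}

/-- `X(b)` is almost feasible. -/
def AlmostFeasX (A : E →ₗ[ℝ] E') (K : Set E') (C : Set E) (b : E') : Prop :=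
  ∀ ε : ℝ, 0 < ε → ∃ bε : E', ‖bε‖ ≤ ε ∧ (Xfeas A K C (b + bε)).Nonempty

/-- `Y(c)` is almost feasible. -/
def AlmostFeasY (A : E →ₗ[ℝ] E') (K : Set E') (C : Set E) (c : E) : Prop :=
  ∀ ε : ℝ, 0 < ε → ∃ cε : E, ‖cε‖ ≤ ε ∧ (Yfeas A K C (c + cε)).Nonempty

open Filter Topology Bornology

lemma aux_coercive {X Y : Type*} [NormedAddCommGroup X] [NormedSpace ℝ X]
    [FiniteDimensional ℝ X] [NormedAddCommGroup Y] [NormedSpace ℝ Y]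
    (f : X →ₗ[ℝ] Y) {Q : Set X} (hcl : IsClosed Q)
    (hsmul : ∀ q ∈ Q, ∀ t : ℝ, 0 ≤ t → t • q ∈ Q)
    (hker : ∀ q ∈ Q, f q = 0 → q = 0) :
    ∃ c : ℝ, 0 < c ∧ ∀ q ∈ Q, c * ‖q‖ ≤ ‖f q‖ := by
  have hfc : Continuous f := f.continuous_of_finiteDimensional
  by_cases hS : (Q ∩ Metric.sphere 0 1).Nonempty
  · have hcomp : IsCompact (Q ∩ Metric.sphere 0 1) :=
      (isCompact_sphere 0 1).inter_left hcl
    obtain ⟨q₀, hq₀, hmin⟩ := hcomp.exists_isMinOn hS (Continuous.norm (hfc.comp continuous_id)).continuousOn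
    have hq₀norm : ‖q₀‖ = 1 := by simpa using hq₀.2
    have hfq₀ : f q₀ ≠ 0 := by
      intro h
      have := hker q₀ hq₀.1 h
      rw [this] at hq₀norm; simp at hq₀norm
    refine ⟨‖f q₀‖, norm_pos_iff.2 hfq₀, ?_⟩
    intro q hq
    rcases eq_or_ne q 0 with rfl | hq0
    · simp
    · have hn : (0:ℝ) < ‖q‖ := norm_pos_iff.2 hq0
      have hmem : ‖q‖⁻¹ • q ∈ Q ∩ Metric.sphere 0 1 := by
        refine ⟨hsmul q hq _ (by positivity), ?_⟩
        simp [norm_smul, abs_of_pos (inv_pos.2 hn), inv_mul_cancel₀ hn.ne']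
      have := hmin hmem
      simp only [IsMinOn, Function.comp] at this
      have h2 : ‖f q₀‖ ≤ ‖f (‖q‖⁻¹ • q)‖ := this
      rw [map_smul, norm_smul, Real.norm_eq_abs, abs_of_pos (inv_pos.2 hn)] at h2
      rw [mul_comm]
      calc ‖q‖ * ‖f q₀‖ ≤ ‖q‖ * (‖q‖⁻¹ * ‖f q‖) := by
            apply mul_le_mul_of_nonneg_left h2 hn.le
        _ = ‖f q‖ := by field_simp
  · refine ⟨1, one_pos, ?_⟩
    intro q hq
    rcases eq_or_ne q 0 with rfl | hq0
    · simp
    · exfalso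
      apply hS
      have hn : (0:ℝ) < ‖q‖ := norm_pos_iff.2 hq0
      exact ⟨‖q‖⁻¹ • q, hsmul q hq _ (by positivity),
        by simp [norm_smul, abs_of_pos (inv_pos.2 hn), inv_mul_cancel₀ hn.ne']⟩

lemma aux_closed_image {X Y : Type*} [NormedAddCommGroup X] [NormedSpace ℝ X]
    [FiniteDimensional ℝ X] [NormedAddCommGroup Y] [NormedSpace ℝ Y]
    (f : X →ₗ[ℝ] Y) {Q : Set X} (hcl : IsClosed Q)
    (hsmul : ∀ q ∈ Q, ∀ t : ℝ, 0 ≤ t → t • q ∈ Q)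
    (hker : ∀ q ∈ Q, f q = 0 → q = 0) : IsClosed (f '' Q) := by
  have hfc : Continuous f := f.continuous_of_finiteDimensional
  obtain ⟨c, hc, hco⟩ := aux_coercive f hcl hsmul hker
  rw [← isSeqClosed_iff_isClosed]
  intro p p₀ hpmem hptend
  choose q hqQ hfq using hpmem
  have hbdd : IsBounded (range p) := Metric.isBounded_range_of_tendsto p hptend
  obtain ⟨R, hR⟩ := hbdd.subset_closedBall 0
  have hqbdd : ∀ n, q n ∈ Metric.closedBall (0:X) (R / c) := by
    intro n
    have h1 : c * ‖q n‖ ≤ ‖f (q n)‖ := hco _ (hqQ n)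
    have h2 : ‖p n‖ ≤ R := by simpa using hR (mem_range_self n)
    rw [hfq n] at h1
    rw [Metric.mem_closedBall, dist_zero_right]
    rw [le_div_iff₀ hc, mul_comm]
    linarith
  obtain ⟨a, _, φ, hφ, hconv⟩ := tendsto_subseq_of_bounded
    (Metric.isBounded_closedBall (x := (0:X)) (r := R / c)) hqbdd
  have haQ : a ∈ Q := hcl.mem_of_tendsto hconv (Eventually.of_forall fun n => hqQ (φ n))
  have hfa : f a = p₀ := by
    have h1 : Tendsto (fun n => f (q (φ n))) atTop (𝓝 (f a)) := (hfc.tendsto a).comp hconv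
    have h2 : Tendsto (fun n => f (q (φ n))) atTop (𝓝 p₀) := by
      simp only [hfq]
      exact hptend.comp hφ.tendsto_atTop
    exact tendsto_nhds_unique h1 h2
  exact ⟨a, haQ, hfa⟩

section Aux
variable {F : Type*} [NormedAddCommGroup F] [InnerProductSpace ℝ F]

lemma aux_relint_step {S : Set F} {a w : F} (ha : a ∈ intrinsicInterior ℝ S) (hw : w ∈ S) :
    ∃ ε : ℝ, 0 < ε ∧ a + ε • (a - w) ∈ S := by
  obtain ⟨p, hp, rfl⟩ := ha
  have hwspan : w ∈ affineSpan ℝ S := subset_affineSpan ℝ S hw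
  have hmem : ∀ t : ℝ, (p : F) + t • ((p : F) - w) ∈ affineSpan ℝ S := by
    intro t
    have := AffineSubspace.smul_vsub_vadd_mem (affineSpan ℝ S) t p.2 hwspan p.2
    simpa [vsub_eq_sub, vadd_eq_add, add_comm] using this
  set c : ℝ → affineSpan ℝ S := fun t => ⟨(p : F) + t • ((p : F) - w), hmem t⟩ with hc
  have hcont : Continuous c := by
    apply Continuous.subtype_mk
    fun_prop
  have hc0 : c 0 = p := by ext; simp [hc]
  have hopen : IsOpen (c ⁻¹' interior ((↑) ⁻¹' S : Set (affineSpan ℝ S))) :=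
    isOpen_interior.preimage hcont
  have h0 : (0 : ℝ) ∈ c ⁻¹' interior ((↑) ⁻¹' S) := by simp [hc0, hp]
  obtain ⟨ε, hε, hball⟩ := Metric.isOpen_iff.1 hopen 0 h0
  refine ⟨ε / 2, by positivity, ?_⟩
  have : c (ε / 2) ∈ interior ((↑) ⁻¹' S : Set (affineSpan ℝ S)) := by
    apply hball
    rw [Metric.mem_ball, dist_zero_right, Real.norm_eq_abs, abs_of_pos (by positivity : (0:ℝ) < ε/2)]
    linarith
  have := interior_subset this
  simpa [hc] using this

lemma IsClosedConvexCone.add_mem {S : Set F} (hS : IsClosedConvexCone S) {x y : F}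
    (hx : x ∈ S) (hy : y ∈ S) : x + y ∈ S := by
  have h := hS.convex hx hy (by norm_num : (0:ℝ) ≤ 1/2) (by norm_num : (0:ℝ) ≤ 1/2) (by norm_num)
  have h2 := hS.smul_mem h (by norm_num : (0:ℝ) ≤ 2)
  have : (2:ℝ) • ((1/2 : ℝ) • x + (1/2 : ℝ) • y) = x + y := by
    rw [smul_add, smul_smul, smul_smul]; norm_num
  rwa [this] at h2

lemma aux_dual_anti [FiniteDimensional ℝ F] {S : Set F} (hS : IsClosedConvexCone S) {a : F}
    (ha : a ∈ intrinsicInterior ℝ (dualCone S)) {z : F} (hz : z ∈ S)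
    (h0 : ⟪z, a⟫ = 0) : -z ∈ S := by
  have hle : ∀ w ∈ dualCone S, ⟪z, w⟫ ≤ 0 := by
    intro w hw
    obtain ⟨ε, hε, hmem⟩ := aux_relint_step ha hw
    have := hmem z hz
    rw [inner_add_right, inner_smul_right, inner_sub_right, h0] at this
    nlinarith
  -- build the convex cone with carrier S
  let Sc : ConvexCone ℝ F :=
    { carrier := S
      smul_mem' := fun t ht x hx => hS.smul_mem hx ht.le
      add_mem' := fun x hx y hy => hS.add_mem hx hy }
  let Sp : ProperCone ℝ F :=
    { carrier := S
      add_mem' := fun hx hy => hS.add_mem hx hy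
      zero_mem' := hS.zero_mem
      smul_mem' := fun c x hx => hS.smul_mem hx c.2
      isClosed' := hS.closed }
  have key : ProperCone.innerDual (ProperCone.innerDual (Sp : Set F) : Set F) = Sp :=
    ProperCone.innerDual_innerDual Sp
  have hdc : (dualCone S : Set F) = (ProperCone.innerDual (Sp : Set F) : Set F) := rfl
  have : -z ∈ ProperCone.innerDual (ProperCone.innerDual (Sp : Set F) : Set F) := by
    rw [ProperCone.mem_innerDual]
    intro w hw
    rw [← hdc] at hw
    have := hle w hw
    rw [inner_neg_right]
    rw [real_inner_comm] at this
    linarith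
  rw [key] at this
  exact this

end Aux

theorem stmt19 (A : E →ₗ[ℝ] E') (K : Set E') (C : Set E)
    (hK : IsClosedConvexCone K) (hC : IsClosedConvexCone C) (b : E')
    (L : Submodule ℝ E)
    (hhat : ∃ y ∈ intrinsicInterior ℝ (dualCone K),
      ∃ w ∈ intrinsicInterior ℝ (dualCone C), LinearMap.adjoint A y - w ∈ L) :
    {x : E | x ∈ L ∧ ∃ u ∈ Lᗮ, x + u ∈ Xfeas A K C b} =
      {x : E | x ∈ L ∧ ∀ y ∈ dualCone K, ∀ w ∈ dualCone C,
        LinearMap.adjoint A y - w ∈ L →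
          ⟪LinearMap.adjoint A y - w, x⟫ ≤ ⟪b, y⟫} := by
  classical
  obtain ⟨yh, hyhi, wh, hwhi, hhatL⟩ := hhat
  have hyhK : yh ∈ dualCone K := intrinsicInterior_subset hyhi
  have hwhC : wh ∈ dualCone C := intrinsicInterior_subset hwhi
  set P : E →L[ℝ] E := L.subtypeL.comp (L.orthogonalProjectionOnto) with hPdefn
  have hPapply : ∀ v : E, P v = (L.orthogonalProjectionOnto v : E) := fun v => rfl
  have hPsa : ∀ v u : E, ⟪P v, u⟫ = ⟪v, P u⟫ := fun v u => by
    rw [hPapply, hPapply]; exact Submodule.inner_starProjection_left_eq_right (K := L) v u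
  have hPmem : ∀ v, P v ∈ L := fun v => (L.orthogonalProjectionOnto v).2
  have hPsub : ∀ v, v - P v ∈ Lᗮ := fun v => Submodule.sub_starProjection_mem_orthogonal (K := L) v
  have hPid : ∀ v ∈ L, P v = v := fun v hv => by
    rw [hPapply]; exact Submodule.starProjection_eq_self_iff (K := L) |>.2 hv
  ext x
  simp only [mem_setOf_eq]
  constructor
  · rintro ⟨hxL, u, huL, huC, hbu⟩
    refine ⟨hxL, ?_⟩
    intro y hy w hw hyw
    have h1 : ⟪LinearMap.adjoint A y - w, u⟫ = 0 :=
      (Submodule.mem_orthogonal L u).1 huL _ hyw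
    have h2 : 0 ≤ ⟪x + u, w⟫ := hw _ huC
    have h3 : 0 ≤ ⟪b - A (x + u), y⟫ := hy _ hbu
    have h4 : ⟪LinearMap.adjoint A y, x + u⟫ = ⟪y, A (x + u)⟫ :=
      LinearMap.adjoint_inner_left A (x + u) y
    have e1 : ⟪LinearMap.adjoint A y - w, x⟫ = ⟪LinearMap.adjoint A y - w, x + u⟫ := by
      rw [inner_add_right, h1, add_zero]
    rw [e1, inner_sub_left, h4]
    rw [inner_sub_left] at h3
    have c1 := real_inner_comm (x + u) w
    have c2 := real_inner_comm (A (x + u)) y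
    have c3 := real_inner_comm b y
    linarith
  · rintro ⟨hxL, hineq⟩
    refine ⟨hxL, ?_⟩
    -- the product spaces
    let g : (E × E') →ₗ[ℝ] (E' × E) :=
      LinearMap.prod (A.comp (LinearMap.fst ℝ E E') + LinearMap.snd ℝ E E')
        ((P.toLinearMap).comp (LinearMap.fst ℝ E E'))
    let f : WithLp 2 (E × E') →ₗ[ℝ] WithLp 2 (E' × E) :=
      ((WithLp.linearEquiv 2 ℝ (E' × E)).symm.toLinearMap.comp g).comp
        (WithLp.linearEquiv 2 ℝ (E × E')).toLinearMap
    have hffst : ∀ q : WithLp 2 (E × E'), (f q).fst = A q.fst + q.snd := fun q => rfl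
    have hfsnd : ∀ q : WithLp 2 (E × E'), (f q).snd = P q.fst := fun q => rfl
    set Q : Set (WithLp 2 (E × E')) := {q | q.fst ∈ C ∧ q.snd ∈ K} with hQdefn
    have hQcl : IsClosed Q := by
      have he : Q = (WithLp.prodContinuousLinearEquiv 2 ℝ E E') ⁻¹' (C ×ˢ K) := rfl
      rw [he]
      exact (hC.closed.prod hK.closed).preimage
        (WithLp.prodContinuousLinearEquiv 2 ℝ E E').continuous
    have hQsmul : ∀ q ∈ Q, ∀ t : ℝ, 0 ≤ t → t • q ∈ Q := by
      intro q hq t ht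
      exact ⟨by rw [WithLp.smul_fst]; exact hC.smul_mem hq.1 ht,
             by rw [WithLp.smul_snd]; exact hK.smul_mem hq.2 ht⟩
    have hQadd : ∀ q ∈ Q, ∀ r ∈ Q, q + r ∈ Q := by
      intro q hq r hr
      exact ⟨by rw [WithLp.add_fst]; exact hC.add_mem hq.1 hr.1,
             by rw [WithLp.add_snd]; exact hK.add_mem hq.2 hr.2⟩
    have hQzero : (0 : WithLp 2 (E × E')) ∈ Q :=
      ⟨by rw [WithLp.zero_fst]; exact hC.zero_mem, by rw [WithLp.zero_snd]; exact hK.zero_mem⟩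
    -- kernel directions in Q are symmetric (uses the Slater point)
    have hneg : ∀ q ∈ Q, f q = 0 → -q ∈ Q := by
      intro q hq hfq
      have hAzk : A q.fst + q.snd = 0 := by
        have h2 : (f q).fst = (0 : WithLp 2 (E' × E)).fst := by rw [hfq]
        rwa [hffst, WithLp.zero_fst] at h2
      have hPz : P q.fst = 0 := by
        have h2 : (f q).snd = (0 : WithLp 2 (E' × E)).snd := by rw [hfq]
        rwa [hfsnd, WithLp.zero_snd] at h2
      have hzperp : q.fst ∈ Lᗮ := by
        have : (L.orthogonalProjectionOnto q.fst : E) = 0 := hPz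
        rw [Submodule.coe_eq_zero] at this
        exact Submodule.orthogonalProjectionOnto_eq_zero_iff.1 this
      have hk : q.snd = -A q.fst := eq_neg_of_add_eq_zero_right hAzk
      have t1 : 0 ≤ ⟪q.snd, yh⟫ := hyhK _ hq.2
      have t2 : 0 ≤ ⟪q.fst, wh⟫ := hwhC _ hq.1
      have t3 : ⟪LinearMap.adjoint A yh - wh, q.fst⟫ = 0 :=
        (Submodule.mem_orthogonal L q.fst).1 hzperp _ hhatL
      have t4 : ⟪LinearMap.adjoint A yh, q.fst⟫ = ⟪yh, A q.fst⟫ :=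
        LinearMap.adjoint_inner_left A q.fst yh
      rw [inner_sub_left, t4] at t3
      have t5 : ⟪q.snd, yh⟫ = -⟪yh, A q.fst⟫ := by
        rw [hk, inner_neg_left, real_inner_comm]
      have c1 := real_inner_comm q.fst wh
      have hzw : ⟪q.fst, wh⟫ = 0 := by linarith
      have hky : ⟪q.snd, yh⟫ = 0 := by linarith
      have hnz : -q.fst ∈ C := aux_dual_anti hC hwhi hq.1 hzw
      have hnk : -q.snd ∈ K := aux_dual_anti hK hyhi hq.2 hky
      exact ⟨by rw [WithLp.neg_fst]; exact hnz, by rw [WithLp.neg_snd]; exact hnk⟩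
    -- the lineality subspace
    let W : Submodule ℝ (WithLp 2 (E × E')) :=
      { carrier := {q | q ∈ Q ∧ f q = 0}
        zero_mem' := ⟨hQzero, map_zero f⟩
        add_mem' := fun ha hb =>
          ⟨hQadd _ ha.1 _ hb.1, by rw [map_add, ha.2, hb.2, add_zero]⟩
        smul_mem' := by
          intro t q hq
          refine ⟨?_, by rw [map_smul, hq.2, smul_zero]⟩
          rcases le_or_gt 0 t with ht | ht
          · exact hQsmul _ hq.1 _ ht
          · have : t • q = (-t) • (-q) := by rw [neg_smul, smul_neg, neg_neg]
            rw [this]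
            exact hQsmul _ (hneg _ hq.1 hq.2) _ (by linarith) }
    have hWmem : ∀ w' : WithLp 2 (E × E'), w' ∈ W ↔ w' ∈ Q ∧ f w' = 0 := fun w' => Iff.rfl
    set Q' : Set (WithLp 2 (E × E')) := Q ∩ (Wᗮ : Set (WithLp 2 (E × E'))) with hQ'defn
    have hQ'cl : IsClosed Q' := hQcl.inter (Submodule.closed_of_finiteDimensional Wᗮ)
    have hQ'smul : ∀ q ∈ Q', ∀ t : ℝ, 0 ≤ t → t • q ∈ Q' := fun q hq t ht =>
      ⟨hQsmul _ hq.1 _ ht, Wᗮ.smul_mem t hq.2⟩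
    have hker : ∀ q ∈ Q', f q = 0 → q = 0 := by
      intro q hq hfq
      have hqW : q ∈ W := (hWmem q).2 ⟨hq.1, hfq⟩
      have : ⟪q, q⟫ = 0 := (Submodule.mem_orthogonal W q).1 hq.2 q hqW
      exact inner_self_eq_zero.1 this
    set M : Set (WithLp 2 (E' × E)) := f '' Q' with hMdefn
    have hMcl : IsClosed M := aux_closed_image f hQ'cl hQ'smul hker
    have hMQ : ∀ q ∈ Q, f q ∈ M := by
      intro q hq
      obtain ⟨w, hwW, q₂, hq₂, hsum⟩ := W.exists_add_mem_mem_orthogonal q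
      have hq₂Q : q₂ ∈ Q := by
        have hnw : -w ∈ Q := by
          have : -w ∈ W := W.neg_mem hwW
          exact ((hWmem _).1 this).1
        have : q₂ = q + -w := by rw [hsum]; abel
        rw [this]
        exact hQadd _ hq _ hnw
      refine ⟨q₂, ⟨hq₂Q, hq₂⟩, ?_⟩
      have : f q = f w + f q₂ := by rw [← map_add, ← hsum]
      rw [this, ((hWmem w).1 hwW).2, zero_add]
    -- M as a convex cone
    let Mc : ConvexCone ℝ (WithLp 2 (E' × E)) :=
      { carrier := M
        smul_mem' := by
          rintro t ht m ⟨q, hq, rfl⟩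
          exact ⟨t • q, hQ'smul _ hq _ ht.le, map_smul f t q⟩
        add_mem' := by
          rintro m₁ ⟨q₁, hq₁, rfl⟩ m₂ ⟨q₂, hq₂, rfl⟩
          exact ⟨q₁ + q₂, ⟨hQadd _ hq₁.1 _ hq₂.1, Wᗮ.add_mem hq₁.2 hq₂.2⟩,
            map_add f q₁ q₂⟩ }
    have hMne : (Mc : Set (WithLp 2 (E' × E))).Nonempty :=
      ⟨0, ⟨0, ⟨hQzero, Wᗮ.zero_mem⟩, map_zero f⟩⟩
    let Mp : ProperCone ℝ (WithLp 2 (E' × E)) :=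
      { carrier := M
        add_mem' := fun ha hb => Mc.add_mem' ha hb
        zero_mem' := ⟨0, ⟨hQzero, Wᗮ.zero_mem⟩, map_zero f⟩
        smul_mem' := by
          rintro c m ⟨q, hq, rfl⟩
          exact ⟨(c : ℝ) • q, hQ'smul _ hq _ c.2, map_smul f (c : ℝ) q⟩
        isClosed' := hMcl }
    set bx : WithLp 2 (E' × E) := (WithLp.equiv 2 (E' × E)).symm (b, x) with hbxdefn
    have hbxfst : bx.fst = b := rfl
    have hbxsnd : bx.snd = x := rfl
    -- bx belongs to M
    have hbxM : bx ∈ M := by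
      by_contra hbx
      obtain ⟨Y, hY1, hY2⟩ :=
        ProperCone.hyperplane_separation' Mp hbx
      have hkey : ∀ z ∈ C, ∀ k ∈ K, 0 ≤ ⟪A z + k, Y.fst⟫ + ⟪P z, Y.snd⟫ := by
        intro z hz k hk
        set q : WithLp 2 (E × E') := (WithLp.equiv 2 (E × E')).symm (z, k) with hqdefn
        have hqQ : q ∈ Q := ⟨hz, hk⟩
        have := hY1 (f q) (hMQ q hqQ)
        rwa [WithLp.prod_inner_apply] at this
      have hyK : Y.fst ∈ dualCone K := by
        intro k hk
        have := hkey 0 hC.zero_mem k hk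
        simpa using this
      have hwC : LinearMap.adjoint A Y.fst + P Y.snd ∈ dualCone C := by
        intro z hz
        have h0 := hkey z hz 0 hK.zero_mem
        rw [add_zero] at h0
        rw [inner_add_right]
        have e1 : ⟪z, LinearMap.adjoint A Y.fst⟫ = ⟪A z, Y.fst⟫ := by
          rw [real_inner_comm, LinearMap.adjoint_inner_left]
          exact real_inner_comm _ _
        have e2 : ⟪z, P Y.snd⟫ = ⟪P z, Y.snd⟫ := (hPsa z Y.snd).symm ▸ rfl
        rw [e1, ← hPsa]
        linarith [hPsa z Y.snd]
      have hLmem : LinearMap.adjoint A Y.fst - (LinearMap.adjoint A Y.fst + P Y.snd) ∈ L := by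
        have : LinearMap.adjoint A Y.fst - (LinearMap.adjoint A Y.fst + P Y.snd)
            = -(P Y.snd) := by abel
        rw [this]
        exact L.neg_mem (hPmem _)
      have hmain := hineq Y.fst hyK _ hwC hLmem
      have e3 : LinearMap.adjoint A Y.fst - (LinearMap.adjoint A Y.fst + P Y.snd)
          = -(P Y.snd) := by abel
      rw [e3, inner_neg_left] at hmain
      have e4 : ⟪P Y.snd, x⟫ = ⟪Y.snd, x⟫ := by
        rw [hPsa]
        rw [hPid x hxL]
      rw [e4] at hmain
      -- hmain : -⟪Y.snd, x⟫ ≤ ⟪b, Y.fst⟫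
      have e5 : ⟪Y, bx⟫ = ⟪Y.fst, b⟫ + ⟪Y.snd, x⟫ := by
        rw [WithLp.prod_inner_apply]; rfl
      rw [real_inner_comm, e5] at hY2
      have c4 := real_inner_comm b Y.fst
      linarith
    obtain ⟨q, hqQ', hfq⟩ := hbxM
    have hAzk : A q.fst + q.snd = b := by
      have h2 : (f q).fst = bx.fst := by rw [hfq]
      rwa [hffst, hbxfst] at h2
    have hPz : P q.fst = x := by
      have h2 : (f q).snd = bx.snd := by rw [hfq]
      rwa [hfsnd, hbxsnd] at h2
    refine ⟨q.fst - x, ?_, ?_, ?_⟩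
    · have := hPsub q.fst
      rwa [hPz] at this
    · have : x + (q.fst - x) = q.fst := by abel
      rw [this]
      exact hqQ'.1.1
    · have hx : x + (q.fst - x) = q.fst := by abel
      rw [hx]
      have : b - A q.fst = q.snd := by rw [← hAzk]; abel
      rw [this]
      exact hqQ'.1.2
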